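/- If (a_k) is a nonnegative log-concave sequence with no internal zeros and ℓ is a positive integer, then the sequence (b_k) defined by b_k = a_k + a_{k+1} + ⋯ + a_{k+ℓ} is log-concave. -/

import Mathlib

lemma key_spread (a : ℕ → ℝ)
    (hnonneg : ∀ k, 0 ≤ a k)
    (hlc : ∀ k, 1 ≤ k → a (k - 1) * a (k + 1) ≤ a k ^ 2)
    (hniz : ∀ i j k, i ≤ k → k ≤ j → a i ≠ 0 → a j ≠ 0 → a k ≠ 0) :
    ∀ i j, i ≤ j → a i * a (j + 2) ≤ a (i + 1) * a (j + 1) := by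
  intro i j hij
  induction j, hij using Nat.le_induction with
  | base =>
    have h := hlc (i + 1) (by omega)
    simpa [pow_two] using h
  | succ j hij ih =>
    by_cases hz2 : a (j + 2) = 0
    · by_cases hz3 : a (j + 3) = 0
      · rw [show j + 1 + 2 = j + 3 from rfl, hz3, mul_zero]
        exact mul_nonneg (hnonneg _) (hnonneg _)
      · by_cases hzi : a i = 0
        · rw [hzi, zero_mul]
          exact mul_nonneg (hnonneg _) (hnonneg _)
        · exact (hniz i (j + 3) (j + 2) (by omega) (by omega) hzi hz3 hz2).elim
    · by_cases hz1 : a (j + 1) = 0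
      · by_cases hzi : a i = 0
        · rw [hzi, zero_mul]
          exact mul_nonneg (hnonneg _) (hnonneg _)
        · exact (hniz i (j + 2) (j + 1) (by omega) (by omega) hzi hz2 hz1).elim
      · have hp1 : 0 < a (j + 1) := lt_of_le_of_ne (hnonneg _) (Ne.symm hz1)
        have hp2 : 0 < a (j + 2) := lt_of_le_of_ne (hnonneg _) (Ne.symm hz2)
        have hlc2 := hlc (j + 2) (by omega)
        rw [show j + 2 - 1 = j + 1 by omega] at hlc2
        -- hlc2 : a (j+1) * a (j+3) ≤ a (j+2) ^ 2
        have h1 : a i * (a (j + 1) * a (j + 2 + 1)) ≤ a i * a (j + 2) ^ 2 :=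
          mul_le_mul_of_nonneg_left hlc2 (hnonneg i)
        have h2 : a i * a (j + 2) * a (j + 2) ≤ a (i + 1) * a (j + 1) * a (j + 2) :=
          mul_le_mul_of_nonneg_right ih (hnonneg _)
        have h3 : a i * a (j + 3) * a (j + 1) ≤ a (i + 1) * a (j + 2) * a (j + 1) := by
          nlinarith [h1, h2]
        have := le_of_mul_le_mul_right h3 hp1
        simpa [show j + 1 + 2 = j + 3 from rfl, show j + 1 + 1 = j + 2 from rfl] using this

/-- Lemma 3.5(2): if `(a_k)` is nonnegative, log-concave, with no internal
zeros, and `ℓ ≥ 1`, then `(a_k + a_{k+1} + ⋯ + a_{k+ℓ})` is log-concave. -/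
theorem stmt_7 (a : ℕ → ℝ) (ℓ : ℕ) (hℓ : 1 ≤ ℓ)
    (hnonneg : ∀ k, 0 ≤ a k)
    (hlc : ∀ k, 1 ≤ k → a (k - 1) * a (k + 1) ≤ a k ^ 2)
    (hniz : ∀ i j k, i ≤ k → k ≤ j → a i ≠ 0 → a j ≠ 0 → a k ≠ 0) :
    ∀ k, 1 ≤ k →
      (∑ t ∈ Finset.range (ℓ + 1), a (k - 1 + t)) *
        (∑ t ∈ Finset.range (ℓ + 1), a (k + 1 + t)) ≤
      (∑ t ∈ Finset.range (ℓ + 1), a (k + t)) ^ 2 := by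
  intro k hk
  obtain ⟨m, rfl⟩ : ∃ m, k = m + 1 := ⟨k - 1, (Nat.succ_pred_eq_of_pos hk).symm⟩
  simp only [Nat.add_sub_cancel]
  have key := key_spread a hnonneg hlc hniz
  set C := ∑ t ∈ Finset.range ℓ, a (m + 1 + t) with hCdef
  set C' := ∑ t ∈ Finset.range ℓ, a (m + 2 + t) with hC'def
  have e1 : ∑ t ∈ Finset.range (ℓ + 1), a (m + t) = a m + C := by
    rw [Finset.sum_range_succ']
    simp only [Nat.add_zero]
    rw [add_comm]
    congr 1
    exact Finset.sum_congr rfl fun t _ => by congr 1; omega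
  have e2 : ∑ t ∈ Finset.range (ℓ + 1), a (m + 1 + 1 + t) = C' + a (m + 2 + ℓ) := by
    rw [Finset.sum_range_succ]
  have e3 : ∑ t ∈ Finset.range (ℓ + 1), a (m + 1 + t) = a (m + 1) + C' := by
    rw [Finset.sum_range_succ']
    simp only [Nat.add_zero]
    rw [add_comm]
    congr 1
    exact Finset.sum_congr rfl fun t _ => by congr 1; omega
  have e4 : ∑ t ∈ Finset.range (ℓ + 1), a (m + 1 + t) = C + a (m + 1 + ℓ) := by
    rw [Finset.sum_range_succ]
  rw [e1, e2, pow_two]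
  nth_rewrite 1 [e3]
  rw [e4]
  have hA : a m * C' ≤ a (m + 1) * C := by
    rw [Finset.mul_sum, Finset.mul_sum]
    refine Finset.sum_le_sum fun t _ => ?_
    have h := key m (m + t) (by omega)
    calc a m * a (m + 2 + t) = a m * a (m + t + 2) := by congr 2; omega
      _ ≤ a (m + 1) * a (m + t + 1) := h
      _ = a (m + 1) * a (m + 1 + t) := by congr 2; omega
  have hB : a m * a (m + 2 + ℓ) ≤ a (m + 1) * a (m + 1 + ℓ) := by
    have h := key m (m + ℓ) (by omega)
    calc a m * a (m + 2 + ℓ) = a m * a (m + ℓ + 2) := by congr 2; omega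
      _ ≤ a (m + 1) * a (m + ℓ + 1) := h
      _ = a (m + 1) * a (m + 1 + ℓ) := by congr 2; omega
  have hC : C * a (m + 2 + ℓ) ≤ C' * a (m + 1 + ℓ) := by
    rw [Finset.sum_mul, Finset.sum_mul]
    refine Finset.sum_le_sum fun t ht => ?_
    have htl : t < ℓ := Finset.mem_range.mp ht
    have h := key (m + 1 + t) (m + ℓ) (by omega)
    calc a (m + 1 + t) * a (m + 2 + ℓ) = a (m + 1 + t) * a (m + ℓ + 2) := by congr 2; omega
      _ ≤ a (m + 1 + t + 1) * a (m + ℓ + 1) := h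
      _ = a (m + 2 + t) * a (m + 1 + ℓ) := by congr 2 <;> omega
  nlinarith [hA, hB, hC]
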